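/- arXiv:2511.13443 — 3 statements merged into one kernel-verified Lean document; each statement's English description precedes it below -/
import Mathlib

section
/- Let n ≥ 1, let A ∈ M_n(ℤ) be a positive integer matrix (no eigenvalue of A in ℚ̄ is 0 or a root of unity), and let k be an algebraically closed field of characteristic zero. Then the set of φ_A-periodic points in (k^*)^n, i.e., {u ∈ (k^*)^n : φ_A^{∘m}(u) = u for some m ≥ 1}, is Zariski dense in 𝔾_m^n: no nonzero Laurent polynomial over k vanishes on all φ_A-periodic points. -/
noncomputable section

/-- The group endomorphism `φ_A` of `𝔾_m^n(k) = (k^*)^n` attached to an integer matrix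
`A = (a_{ij})`: `(u_1, …, u_n) ↦ (∏_j u_j^{a_{1j}}, …, ∏_j u_j^{a_{nj}})`. -/
def phiA {k : Type*} [Field k] {n : ℕ} (A : Matrix (Fin n) (Fin n) ℤ) (u : Fin n → kˣ) :
    Fin n → kˣ :=
  fun i => ∏ j, u j ^ (A i j)

/-- An integer matrix is positive if no eigenvalue (root of its characteristic polynomial
in `ℚ̄ ⊆ ℂ`) is `0` or a root of unity. -/
def Matrix.IsPositiveZMatrix {n : ℕ} (A : Matrix (Fin n) (Fin n) ℤ) : Prop :=
  ∀ ν : ℂ, (Matrix.charpoly (A.map (fun x : ℤ => (x : ℂ)))).IsRoot ν →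
    ν ≠ 0 ∧ ∀ m : ℕ, 0 < m → ν ^ m ≠ 1

/-! ### Auxiliary lemmas -/

open MvPolynomial in
/-- A multivariate polynomial vanishing on a grid `S^n` with `S` infinite is zero. -/
lemma grid_vanish {k : Type*} [CommRing k] [IsDomain k] {S : Set k} (hS : S.Infinite) :
    ∀ {n : ℕ} (p : MvPolynomial (Fin n) k),
      (∀ x : Fin n → k, (∀ i, x i ∈ S) → MvPolynomial.eval x p = 0) → p = 0 := by
  intro n
  induction n with
  | zero =>
    intro p hp
    have := hp (fun i => 0) (fun i => i.elim0)
    rw [p.eq_C_of_isEmpty] at this ⊢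
    simpa using this
  | succ n ih =>
    intro p hp
    have key : ∀ x : Fin n → k, (∀ i, x i ∈ S) →
        Polynomial.map (eval x) (finSuccEquiv k n p) = 0 := by
      intro x hx
      refine Polynomial.eq_zero_of_infinite_isRoot _ (hS.mono ?_)
      intro y hy
      have := hp (Fin.cons y x) (fun i => by
        refine Fin.cases ?_ ?_ i
        · exact hy
        · exact fun j => hx j)
      rw [eval_eq_eval_mv_eval'] at this
      exact this
    have hcoeff : ∀ i, (finSuccEquiv k n p).coeff i = 0 := by
      intro i
      refine ih _ (fun x hx => ?_)
      have := congrArg (fun q => Polynomial.coeff q i) (key x hx)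
      simpa using this
    have : finSuccEquiv k n p = 0 := Polynomial.ext (fun i => by simp [hcoeff i])
    exact (map_eq_zero_iff _ (finSuccEquiv k n).injective).mp this

lemma zpow_sum' {G ι : Type*} [CommGroup G] (x : G) (s : Finset ι) (f : ι → ℤ) :
    x ^ (∑ i ∈ s, f i) = ∏ i ∈ s, x ^ f i := by
  induction s using Finset.cons_induction with
  | empty => simp
  | cons a s ha ih => rw [Finset.sum_cons, Finset.prod_cons, zpow_add, ih]

lemma phiA_mul {k : Type*} [Field k] {n : ℕ} (A B : Matrix (Fin n) (Fin n) ℤ)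
    (u : Fin n → kˣ) : phiA (A * B) u = phiA A (phiA B u) := by
  funext i
  calc (phiA (A * B) u) i = ∏ l, ∏ j, u l ^ (A i j * B j l) := by
        simp only [phiA, Matrix.mul_apply, zpow_sum']
      _ = ∏ j, ∏ l, u l ^ (A i j * B j l) := Finset.prod_comm
      _ = ∏ j, (∏ l, u l ^ (B j l)) ^ A i j := by
        simp only [← Finset.prod_zpow, ← zpow_mul, mul_comm]
      _ = phiA A (phiA B u) i := rfl

lemma phiA_one {k : Type*} [Field k] {n : ℕ} (u : Fin n → kˣ) :
    phiA (1 : Matrix (Fin n) (Fin n) ℤ) u = u := by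
  funext i
  simp [phiA, Matrix.one_apply, apply_ite (fun a : ℤ => u _ ^ a)]

lemma phiA_iter {k : Type*} [Field k] {n : ℕ} (A : Matrix (Fin n) (Fin n) ℤ)
    (u : Fin n → kˣ) (m : ℕ) : (phiA A)^[m] u = phiA (A ^ m) u := by
  induction m with
  | zero => simp [phiA_one]
  | succ m ih => rw [Function.iterate_succ_apply', ih, ← phiA_mul, ← pow_succ']

lemma zpow_eq_of_dvd {G : Type*} [Group G] {x : G} {N : ℕ} (hx : x ^ (N:ℤ) = 1)
    {a b : ℤ} (h : (N:ℤ) ∣ a - b) : x ^ a = x ^ b := by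
  obtain ⟨c, hc⟩ := h
  have : a = b + N * c := by linarith
  rw [this, zpow_add, zpow_mul, hx, one_zpow, mul_one]

lemma det_ne_zero_of_pos {n : ℕ} (A : Matrix (Fin n) (Fin n) ℤ)
    (hA : A.IsPositiveZMatrix) : A.det ≠ 0 := by
  intro h0
  have hmap : (A.map (fun x : ℤ => (x : ℂ))).det = 0 := by
    have : A.map (fun x : ℤ => (x : ℂ)) = (Int.castRingHom ℂ).mapMatrix A := rfl
    rw [this, ← RingHom.map_det, h0]; simp
  have hroot : (Matrix.charpoly (A.map (fun x : ℤ => (x : ℂ)))).IsRoot 0 := by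
    rw [Polynomial.IsRoot, ← Polynomial.coeff_zero_eq_eval_zero]
    have h := (Matrix.det_eq_sign_charpoly_coeff (A.map (fun x : ℤ => (x : ℂ)))).symm
    rw [hmap] at h
    rcases mul_eq_zero.mp h with h | h
    · exact absurd h (pow_ne_zero _ (by norm_num))
    · exact h
  exact (hA 0 hroot).1 rfl

lemma exists_pow_eq_one_matrix {n N : ℕ} [NeZero N] (A : Matrix (Fin n) (Fin n) ℤ)
    (hdet : IsUnit ((A.det : ZMod N))) :
    ∃ m : ℕ, 1 ≤ m ∧ ((Int.castRingHom (ZMod N)).mapMatrix A) ^ m = 1 := by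
  have hu : IsUnit ((Int.castRingHom (ZMod N)).mapMatrix A) := by
    rw [Matrix.isUnit_iff_isUnit_det, ← RingHom.map_det]
    exact hdet
  obtain ⟨w, hw⟩ := hu
  exact ⟨orderOf w, orderOf_pos w,
    by rw [← hw, ← Units.val_pow_eq_pow_val, pow_orderOf_eq_one, Units.val_one]⟩

lemma qpow_roots_infinite (k : Type*) [Field k] [IsAlgClosed k] [CharZero k]
    {q : ℕ} (hq : q.Prime) :
    {x : k | ∃ t : ℕ, x ^ (q ^ (t + 1)) = 1}.Infinite := by
  intro hfin
  set F := hfin.toFinset with hF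
  set N := q ^ (F.card + 1) with hN
  haveI : NeZero ((N : ℕ) : k) := ⟨by
    exact_mod_cast pow_ne_zero _ (Nat.cast_ne_zero.mpr hq.ne_zero)⟩
  obtain ⟨ζ, hζ⟩ := HasEnoughRootsOfUnity.exists_primitiveRoot k N
  have hsub : Polynomial.nthRootsFinset N (1 : k) ⊆ F := by
    intro x hx
    rw [Polynomial.mem_nthRootsFinset (pow_pos hq.pos _) (1 : k)] at hx
    exact hfin.mem_toFinset.mpr ⟨F.card, hx⟩
  have hcard := Finset.card_le_card hsub
  rw [hζ.card_nthRootsFinset] at hcard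
  have : F.card < N := lt_of_lt_of_le (Nat.lt_pow_self (n := F.card) hq.one_lt)
    (pow_le_pow_right₀ hq.one_lt.le (Nat.le_succ _))
  omega

lemma isUnit_intCast_of_coprime {N : ℕ} (d : ℤ) (hd : Nat.Coprime d.natAbs N) :
    IsUnit ((d : ZMod N)) := by
  have h1 : IsUnit ((d.natAbs : ZMod N)) := (ZMod.isUnit_iff_coprime _ _).mpr hd
  rcases Int.natAbs_eq d with h | h
  · rw [h, Int.cast_natCast]; exact h1
  · rw [h, Int.cast_neg, Int.cast_natCast]; exact h1.neg

/-- For a positive integer matrix `A`, the set of `φ_A`-periodic points of `𝔾_m^n` over an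
algebraically closed field `k` of characteristic zero is Zariski dense: no nonzero
(Laurent) polynomial vanishes on all `φ_A`-periodic points. -/
theorem periodic_points_of_positive_matrix_dense
    (k : Type*) [Field k] [IsAlgClosed k] [CharZero k]
    (n : ℕ) (hn : 1 ≤ n)
    (A : Matrix (Fin n) (Fin n) ℤ) (hA : A.IsPositiveZMatrix) :
    ∀ p : MvPolynomial (Fin n) k,
      (∀ u : Fin n → kˣ, (∃ m : ℕ, 1 ≤ m ∧ (phiA A)^[m] u = u) →
        MvPolynomial.eval (fun i => (u i : k)) p = 0) → p = 0 := by
  intro p hp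
  have hdet : A.det ≠ 0 := det_ne_zero_of_pos A hA
  obtain ⟨q, hqle, hq⟩ := Nat.exists_infinite_primes (A.det.natAbs + 1)
  have hqnd : ¬ (q ∣ A.det.natAbs) := fun h =>
    absurd (Nat.le_of_dvd (Int.natAbs_pos.mpr hdet) h) (by omega)
  refine grid_vanish (qpow_roots_infinite k hq) p (fun x hx => ?_)
  choose ts hts using hx
  set T := Finset.univ.sup ts with hT
  set N := q ^ (T + 1) with hNdef
  haveI : NeZero N := ⟨pow_ne_zero _ hq.ne_zero⟩
  have hxN : ∀ i, x i ^ N = 1 := by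
    intro i
    obtain ⟨c, hc⟩ := pow_dvd_pow q (show ts i + 1 ≤ T + 1 by
      have := Finset.le_sup (f := ts) (Finset.mem_univ i); omega)
    rw [hNdef, hc, pow_mul, hts i, one_pow]
  have hxne : ∀ i, x i ≠ 0 := by
    intro i h
    have := hxN i
    rw [h, zero_pow (NeZero.ne N)] at this
    exact one_ne_zero this.symm
  set u : Fin n → kˣ := fun i => Units.mk0 (x i) (hxne i) with hu
  have huN : ∀ j, u j ^ (N : ℤ) = 1 := by
    intro j
    rw [zpow_natCast]
    ext
    rw [Units.val_pow_eq_pow_val]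
    exact hxN j
  -- find m with A^m ≡ 1 mod N
  have hcop : Nat.Coprime A.det.natAbs N :=
    ((Nat.Prime.coprime_iff_not_dvd hq).mpr hqnd).symm.pow_right _
  obtain ⟨m, hm1, hm⟩ := exists_pow_eq_one_matrix (N := N) A
    (isUnit_intCast_of_coprime _ hcop)
  have hent : ∀ i j, ((N : ℤ)) ∣ ((A ^ m) i j - (1 : Matrix (Fin n) (Fin n) ℤ) i j) := by
    intro i j
    rw [← map_pow] at hm
    rw [show ((1 : Matrix (Fin n) (Fin n) (ZMod N))) =
      (Int.castRingHom (ZMod N)).mapMatrix (1 : Matrix (Fin n) (Fin n) ℤ) by simp] at hm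
    have h2 : (((A ^ m) i j : ℤ) : ZMod N) =
        (((1 : Matrix (Fin n) (Fin n) ℤ) i j : ℤ) : ZMod N) := by
      have := congrFun (congrFun (congrArg (fun M => (M : Matrix (Fin n) (Fin n) (ZMod N))) hm) i) j
      simpa [RingHom.mapMatrix_apply, Matrix.map_apply] using this
    rw [ZMod.intCast_eq_intCast_iff] at h2
    exact Int.ModEq.dvd h2.symm
  have hper : (phiA A)^[m] u = u := by
    rw [phiA_iter]
    have : phiA (A ^ m) u = phiA 1 u := by
      funext i
      exact Finset.prod_congr rfl (fun j _ => zpow_eq_of_dvd (huN j) (hent i j))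
    rw [this, phiA_one]
  have := hp u ⟨m, hm1, hper⟩
  simpa [hu] using this
end
end

section
/- Let L be an algebraically closed field equipped with a non-archimedean absolute value |·|, and let f = (f_1,…,f_N) : L^N → L^N be a polynomial map such that every f_j has total degree d ≥ 2 and the homogeneous part f_h = (f_1^+,…,f_N^+) (where f_j^+ is the sum of the degree-d monomials of f_j) satisfies f_h^{-1}(0) = {0} in L^N. Then there exists a constant A ≥ 1 such that for every z ∈ L^N with |z| > A one has |f(z)| > |z|, where |z| := max_{1≤i≤N} |z_i|. In particular, every f-preperiodic point z ∈ L^N satisfies |z| ≤ A. -/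
noncomputable section

namespace EscapeAux

open MvPolynomial

variable {L : Type*} [Field L] {N : ℕ}

def coeffBound (v : AbsoluteValue L ℝ) (P : MvPolynomial (Fin N) L) : ℝ :=
  ∑ s ∈ P.support, v (P.coeff s)

lemma coeffBound_nonneg (v : AbsoluteValue L ℝ) (P : MvPolynomial (Fin N) L) :
    0 ≤ coeffBound v P :=
  Finset.sum_nonneg fun _ _ => v.nonneg _

lemma eval_le (v : AbsoluteValue L ℝ) (P : MvPolynomial (Fin N) L) (z : Fin N → L)
    (M : ℝ) (hM : 1 ≤ M) (hz : ∀ i, v (z i) ≤ M) {e : ℕ} (he : P.totalDegree ≤ e) :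
    v (MvPolynomial.eval z P) ≤ coeffBound v P * M ^ e := by
  rw [MvPolynomial.eval_eq', coeffBound, Finset.sum_mul]
  refine (v.sum_le _ _).trans (Finset.sum_le_sum fun s hs => ?_)
  rw [v.map_mul]
  have h0 : v (∏ i, z i ^ s i) ≤ M ^ e := by
    have h1 : v (∏ i, z i ^ s i) = ∏ i, v (z i) ^ s i := by
      rw [map_prod]
      exact Finset.prod_congr rfl fun i _ => v.map_pow _ _
    rw [h1]
    have hsum : (∑ i, s i) = s.sum fun _ e => e :=
      (Finsupp.sum_fintype s (fun _ e => e) (fun _ => rfl)).symm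
    calc ∏ i, v (z i) ^ s i ≤ ∏ i : Fin N, M ^ s i :=
          Finset.prod_le_prod (fun i _ => pow_nonneg (v.nonneg _) _)
            (fun i _ => pow_le_pow_left₀ (v.nonneg _) (hz i) _)
      _ = M ^ (∑ i, s i) := Finset.prod_pow_eq_pow_sum _ _ _
      _ ≤ M ^ e := by
          apply pow_le_pow_right₀ hM
          rw [hsum]
          exact le_trans (MvPolynomial.le_totalDegree (by simpa using hs)) he
  exact mul_le_mul_of_nonneg_left h0 (v.nonneg _)

lemma eval_smul_homog {P : MvPolynomial (Fin N) L} {n : ℕ} (hP : P.IsHomogeneous n)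
    (t : L) (z : Fin N → L) :
    MvPolynomial.eval (t • z) P = t ^ n * MvPolynomial.eval z P := by
  rw [MvPolynomial.eval_eq', MvPolynomial.eval_eq', Finset.mul_sum]
  refine Finset.sum_congr rfl fun s hs => ?_
  have hdegv : s.degree = n := by
    by_contra hne
    exact (MvPolynomial.mem_support_iff.mp hs) (hP.coeff_eq_zero hne)
  have hdeg : ∑ i, s i = n := by
    rw [← hdegv, Finsupp.degree]
    exact (Finset.sum_subset (Finset.subset_univ _)
      (fun i _ hi => Finsupp.notMem_support_iff.mp hi)).symm
  have hprod : ∏ i, (t • z) i ^ s i = t ^ n * ∏ i, z i ^ s i := by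
    simp only [Pi.smul_apply, smul_eq_mul, mul_pow, Finset.prod_mul_distrib]
    rw [Finset.prod_pow_eq_pow_sum, hdeg]
  rw [hprod]; ring

lemma totalDegree_sub_homog {d : ℕ} (P : MvPolynomial (Fin N) L)
    (hP : P.totalDegree = d) :
    (P - MvPolynomial.homogeneousComponent d P).totalDegree ≤ d - 1 := by
  apply Finset.sup_le
  intro s hs
  rw [MvPolynomial.mem_support_iff] at hs
  by_contra hlt
  push_neg at hlt
  have hdsum : (s.sum fun _ e => e) = s.degree := rfl
  have hd' : d ≤ s.degree := by omega
  apply hs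
  rw [MvPolynomial.coeff_sub, MvPolynomial.coeff_homogeneousComponent]
  rcases eq_or_lt_of_le hd' with h | h
  · rw [if_pos h.symm, sub_self]
  · rw [if_neg (by omega), sub_zero]
    by_contra hc
    have := MvPolynomial.le_totalDegree (p := P) (MvPolynomial.mem_support_iff.mpr hc)
    rw [hP, hdsum] at this
    omega

end EscapeAux

/-- The self-map of `L^N` induced by an `N`-tuple of polynomials. -/
def evalMapL {L : Type*} [CommRing L] {N : ℕ} (f : Fin N → MvPolynomial (Fin N) L)
    (z : Fin N → L) : Fin N → L :=
  fun i => MvPolynomial.eval z (f i)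

/-- `z` is preperiodic under `F`. -/
def IsPreperiodicPt {X : Type*} (F : X → X) (z : X) : Prop :=
  ∃ n m : ℕ, 0 < m ∧ F^[n + m] z = F^[n] z

/-- Escape bound for a regular polynomial endomorphism over a non-archimedean field:
there is `A ≥ 1` such that `|f(z)| > |z|` whenever `|z| > A` (with
`|z| = max_i |z_i|`); in particular every preperiodic point `z` satisfies `|z| ≤ A`. -/
theorem nonarchimedean_escape_bound
    (L : Type*) [Field L] [IsAlgClosed L]
    (v : AbsoluteValue L ℝ) (hv : ∀ x y : L, v (x + y) ≤ max (v x) (v y))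
    (N : ℕ) (f : Fin N → MvPolynomial (Fin N) L)
    (d : ℕ) (hd : 2 ≤ d)
    (hdeg : ∀ j, (f j).totalDegree = d)
    (hreg : ∀ z : Fin N → L,
      (∀ j, MvPolynomial.eval z (MvPolynomial.homogeneousComponent d (f j)) = 0) → z = 0) :
    ∃ A : ℝ, 1 ≤ A ∧
      (∀ z : Fin N → L, A < (⨆ i, v (z i)) →
        (⨆ i, v (z i)) < ⨆ i, v (evalMapL f z i)) ∧
      (∀ z : Fin N → L, IsPreperiodicPt (evalMapL f) z → (⨆ i, v (z i)) ≤ A) := by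
  classical
  open EscapeAux in
  set g : Fin N → MvPolynomial (Fin N) L :=
    fun j => MvPolynomial.homogeneousComponent d (f j) with hgdef
  -- Nullstellensatz: each X i has a power in the ideal generated by the g j
  have hrad : ∀ i : Fin N,
      (MvPolynomial.X i : MvPolynomial (Fin N) L) ∈ (Ideal.span (Set.range g)).radical := by
    intro i
    rw [← MvPolynomial.vanishingIdeal_zeroLocus_eq_radical (K := L),
      MvPolynomial.mem_vanishingIdeal_iff]
    intro x hx
    have hx0 : x = 0 := hreg x fun j => hx (g j) (Ideal.subset_span ⟨j, rfl⟩)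
    rw [hx0, MvPolynomial.aeval_X]
    rfl
  have hpow : ∀ i : Fin N, ∃ (mi : ℕ) (R : Fin N → MvPolynomial (Fin N) L),
      ∑ j, R j * g j = MvPolynomial.X i ^ mi := by
    intro i
    obtain ⟨mi, hmi⟩ := Ideal.mem_radical_iff.mp (hrad i)
    obtain ⟨R, hR⟩ := Ideal.mem_span_range_iff_exists_fun.mp hmi
    exact ⟨mi, R, hR⟩
  choose m R hmR using hpow
  set cR : ℝ := 1 + ∑ i, ∑ j, coeffBound v (R i j) with hcRdef
  set ch : ℝ := 1 + ∑ j, coeffBound v (f j - g j) with hchdef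
  have hcR1 : 1 ≤ cR := le_add_of_nonneg_right <|
    Finset.sum_nonneg fun i _ => Finset.sum_nonneg fun j _ => coeffBound_nonneg v _
  have hch1 : 1 ≤ ch := le_add_of_nonneg_right <|
    Finset.sum_nonneg fun j _ => coeffBound_nonneg v _
  set A : ℝ := cR * (ch + 1) with hAdef
  have hA1 : 1 ≤ A := by nlinarith
  have key : ∀ z : Fin N → L, A < (⨆ i, v (z i)) →
      (⨆ i, v (z i)) < ⨆ i, v (evalMapL f z i) := by
    intro z hz
    rcases isEmpty_or_nonempty (Fin N) with hN | hN
    · rw [Real.iSup_of_isEmpty] at hz; linarith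
    set S := ⨆ i, v (z i) with hSdef
    have hbdd : ∀ (y : Fin N → L), BddAbove (Set.range fun i => v (y i)) :=
      fun y => Set.Finite.bddAbove (Set.finite_range _)
    have hle : ∀ i, v (z i) ≤ S := fun i => le_ciSup (hbdd z) i
    have hS1 : 1 ≤ S := le_trans hA1 hz.le
    obtain ⟨i0, hi0⟩ := Finite.exists_max fun i => v (z i)
    have hSe : S = v (z i0) := le_antisymm (ciSup_le hi0) (le_ciSup (hbdd z) i0)
    have hSpos : 0 < S := lt_of_lt_of_le one_pos hS1
    have ht0 : z i0 ≠ 0 := by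
      intro h
      rw [h, v.map_zero] at hSe
      linarith
    set t : L := z i0 with htdef
    set w : Fin N → L := t⁻¹ • z with hwdef
    have hvt : v t = S := hSe.symm
    have hwle : ∀ i, v (w i) ≤ 1 := by
      intro i
      have hwi : v (w i) = (v t)⁻¹ * v (z i) := by
        rw [hwdef]
        simp only [Pi.smul_apply, smul_eq_mul, v.map_mul]
        rw [map_inv₀]
      rw [hwi, hvt]
      rw [inv_mul_le_iff₀ hSpos, mul_one]
      exact hle i
    have hwi0 : w i0 = 1 := by
      rw [hwdef]; simp only [Pi.smul_apply, smul_eq_mul]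
      exact inv_mul_cancel₀ ht0
    have hrel : (1 : L) = ∑ j, MvPolynomial.eval w (R i0 j) * MvPolynomial.eval w (g j) := by
      have h := congrArg (MvPolynomial.eval w) (hmR i0)
      simpa [map_sum, hwi0] using h.symm
    set B := Finset.univ.sup' Finset.univ_nonempty
      (fun j => v (MvPolynomial.eval w (g j))) with hBdef
    have hBle : ∀ j, v (MvPolynomial.eval w (g j)) ≤ B := by
      intro j
      rw [hBdef]
      exact Finset.le_sup' (fun j => v (MvPolynomial.eval w (g j))) (Finset.mem_univ j)
    have hBnn : 0 ≤ B := le_trans (v.nonneg _) (hBle (Classical.arbitrary (Fin N)))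
    have hone : 1 ≤ cR * B := by
      have h1 : (1 : ℝ) = v (∑ j, MvPolynomial.eval w (R i0 j) * MvPolynomial.eval w (g j)) := by
        rw [← hrel, v.map_one]
      calc (1 : ℝ) = _ := h1
        _ ≤ ∑ j, v (MvPolynomial.eval w (R i0 j) * MvPolynomial.eval w (g j)) := v.sum_le _ _
        _ ≤ ∑ j, coeffBound v (R i0 j) * B := by
            refine Finset.sum_le_sum fun j _ => ?_
            rw [v.map_mul]
            refine mul_le_mul ?_ (hBle j) (v.nonneg _)
              (coeffBound_nonneg v _)
            have := eval_le v (R i0 j) w 1 le_rfl hwle (le_refl (R i0 j).totalDegree)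
            simpa using this
        _ = (∑ j, coeffBound v (R i0 j)) * B := (Finset.sum_mul _ _ _).symm
        _ ≤ cR * B := by
            refine mul_le_mul_of_nonneg_right ?_ hBnn
            have hs : (∑ j, coeffBound v (R i0 j)) ≤ ∑ i, ∑ j, coeffBound v (R i j) :=
              Finset.single_le_sum
                (f := fun i => ∑ j, coeffBound v (R i j))
                (fun i _ => Finset.sum_nonneg fun j _ => coeffBound_nonneg v _)
                (Finset.mem_univ i0)
            rw [hcRdef]; linarith
    have hBpos : 0 < B := by nlinarith
    obtain ⟨j0, _, hj0⟩ := Finset.exists_mem_eq_sup' Finset.univ_nonempty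
      (fun j => v (MvPolynomial.eval w (g j)))
    have hzw : z = t • w := (smul_inv_smul₀ ht0 z).symm
    have hj0' : v (MvPolynomial.eval w (g j0)) = B := by rw [hBdef, hj0]
    have hgz : v (MvPolynomial.eval z (g j0)) = S ^ d * B := by
      conv_lhs => rw [hzw]
      rw [eval_smul_homog (MvPolynomial.homogeneousComponent_isHomogeneous d (f j0)) t w,
        v.map_mul, v.map_pow, hvt, hj0']
    have hhz : v (MvPolynomial.eval z (f j0 - g j0)) ≤ ch * S ^ (d - 1) := by
      have h1 := eval_le v (f j0 - g j0) z S hS1 hle (totalDegree_sub_homog (f j0) (hdeg j0))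
      refine h1.trans ?_
      refine mul_le_mul_of_nonneg_right ?_ (pow_nonneg (by linarith) _)
      have hs : coeffBound v (f j0 - g j0) ≤ ∑ j, coeffBound v (f j - g j) :=
        Finset.single_le_sum (f := fun j => coeffBound v (f j - g j))
          (fun j _ => coeffBound_nonneg v _) (Finset.mem_univ j0)
      rw [hchdef]; linarith
    have hlow : S ^ d * B - ch * S ^ (d - 1) ≤ v (MvPolynomial.eval z (f j0)) := by
      have hsub : MvPolynomial.eval z (g j0)
          = MvPolynomial.eval z (f j0) - MvPolynomial.eval z (f j0 - g j0) := by
        rw [map_sub]; ring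
      have h2 : v (MvPolynomial.eval z (g j0))
          ≤ v (MvPolynomial.eval z (f j0)) + v (MvPolynomial.eval z (f j0 - g j0)) := by
        rw [hsub]
        calc v (MvPolynomial.eval z (f j0) - MvPolynomial.eval z (f j0 - g j0))
            ≤ v (MvPolynomial.eval z (f j0)) + v (-(MvPolynomial.eval z (f j0 - g j0))) := by
              rw [sub_eq_add_neg]; exact v.add_le _ _
          _ = _ := by rw [v.map_neg]
      rw [hgz] at h2
      linarith
    have hSd : S ^ d = S ^ (d - 1) * S := by
      rw [← pow_succ]
      congr 1
      omega
    have hpw : S ≤ S ^ (d - 1) := by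
      calc S = S ^ 1 := (pow_one S).symm
        _ ≤ S ^ (d - 1) := pow_le_pow_right₀ hS1 (by omega)
    have hfinal : S < v (MvPolynomial.eval z (f j0)) := by
      have hSB : ch + 1 < S * B := by
        have h1 : cR * (ch + 1) * B ≤ S * B :=
          mul_le_mul_of_nonneg_right (le_of_lt hz) hBnn
        have h2 : (ch + 1) * 1 ≤ (ch + 1) * (cR * B) :=
          mul_le_mul_of_nonneg_left hone (by linarith)
        nlinarith
      have hfacts : S ^ (d - 1) * (S * B - ch) ≤ v (MvPolynomial.eval z (f j0)) := by
        rw [mul_sub]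
        calc S ^ (d - 1) * (S * B) - S ^ (d - 1) * ch
            = S ^ d * B - ch * S ^ (d - 1) := by rw [hSd]; ring
          _ ≤ _ := hlow
      have hSpow_pos : (0 : ℝ) < S ^ (d - 1) := lt_of_lt_of_le hSpos hpw
      calc S ≤ S ^ (d - 1) := hpw
        _ = S ^ (d - 1) * 1 := (mul_one _).symm
        _ < S ^ (d - 1) * (S * B - ch) := by
            apply mul_lt_mul_of_pos_left _ hSpow_pos
            linarith
        _ ≤ _ := hfacts
    calc S < v (MvPolynomial.eval z (f j0)) := hfinal
      _ ≤ ⨆ i, v (evalMapL f z i) := le_ciSup (hbdd (evalMapL f z)) j0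
  refine ⟨A, hA1, key, ?_⟩
  rintro z ⟨n, mm, hmm, heq⟩
  by_contra hz
  push_neg at hz
  set F := evalMapL f with hF
  have hstep : ∀ k : ℕ, A < (⨆ i, v (F^[k] z i)) ∧
      (⨆ i, v (F^[k] z i)) < ⨆ i, v (F^[k + 1] z i) := by
    intro k
    induction k with
    | zero =>
        constructor
        · simpa using hz
        · have := key z (by simpa using hz)
          simpa [Function.iterate_one] using this
    | succ k ih =>
        have h1 : A < ⨆ i, v (F^[k + 1] z i) := lt_trans ih.1 ih.2
        refine ⟨h1, ?_⟩
        have := key (F^[k + 1] z) h1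
        rw [Function.iterate_succ_apply' F (k + 1) z]
        exact this
  have hsm : StrictMono fun k => ⨆ i, v (F^[k] z i) :=
    strictMono_nat_of_lt_succ fun k => (hstep k).2
  have hlt := hsm (show n < n + mm by omega)
  simp only at hlt
  rw [heq] at hlt
  exact lt_irrefl _ hlt
end
end

section
/- Let N ≥ 1 and let f : ℂ^N → ℂ^N be a regular endomorphism of algebraic degree d ≥ 2. Then the set of f-preperiodic points in ℂ^N is bounded: there exists R > 0 such that every f-preperiodic point x ∈ ℂ^N satisfies ‖x‖ ≤ R. -/
noncomputable section

/-- The house `C(α)` of an algebraic number `α ∈ ℂ`: the maximum of the absolute values of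
the complex roots of its minimal polynomial over `ℚ` (equivalently, of `σ(α)` over all
embeddings `σ : ℚ(α) ↪ ℂ`). -/
def house (α : ℂ) : ℝ :=
  sSup ((fun z : ℂ => ‖z‖) '' {β : ℂ | Polynomial.aeval β (minpoly ℚ α) = 0})

/-- The self-map of `𝔸^N(ℂ)` induced by an `N`-tuple of polynomials. -/
def evalMap {N : ℕ} (f : Fin N → MvPolynomial (Fin N) ℂ) (z : Fin N → ℂ) : Fin N → ℂ :=
  fun i => MvPolynomial.eval z (f i)

/-- A polynomial has all of its coefficients in the subfield `K` of `ℂ`. -/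
def CoeffsIn {n : ℕ} (K : Subfield ℂ) (p : MvPolynomial (Fin n) ℂ) : Prop :=
  ∀ m, MvPolynomial.coeff m p ∈ K

/-- `f = (f_1, …, f_N)` is a regular endomorphism of `𝔸^N` of algebraic degree `d`:
every `f_j` has total degree `d` and the common zero locus of the top-degree homogeneous
parts `f_j^+` is `{0}`. -/
def IsRegularEndo {N : ℕ} (f : Fin N → MvPolynomial (Fin N) ℂ) (d : ℕ) : Prop :=
  (∀ j, (f j).totalDegree = d) ∧
  ∀ z : Fin N → ℂ,
    (∀ j, MvPolynomial.eval z (MvPolynomial.homogeneousComponent d (f j)) = 0) → z = 0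

open MvPolynomial Finset

lemma sum_univ_eq_degree {N : ℕ} (m : Fin N →₀ ℕ) : ∑ i, m i = Finsupp.degree m := by
  rw [Finsupp.degree]
  exact (Finset.sum_subset (Finset.subset_univ _)
    (fun i _ hi => Finsupp.notMem_support_iff.mp hi)).symm

lemma eval_abs_le {N : ℕ} (p : MvPolynomial (Fin N) ℂ) (k : ℕ)
    (hk : ∀ m ∈ p.support, Finsupp.degree m ≤ k) (z : Fin N → ℂ) (hz : 1 ≤ ‖z‖) :
    ‖MvPolynomial.eval z p‖ ≤
      (∑ m ∈ p.support, ‖p.coeff m‖) * ‖z‖ ^ k := by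
  rw [eval_eq']
  calc ‖∑ m ∈ p.support, p.coeff m * ∏ i, z i ^ m i‖
      ≤ ∑ m ∈ p.support, ‖p.coeff m * ∏ i, z i ^ m i‖ :=
        norm_sum_le _ _
    _ ≤ ∑ m ∈ p.support, ‖p.coeff m‖ * ‖z‖ ^ k := by
        refine Finset.sum_le_sum fun m hm => ?_
        rw [norm_mul]
        refine mul_le_mul_of_nonneg_left ?_ (norm_nonneg _)
        calc ‖∏ i, z i ^ m i‖ = ∏ i, ‖z i‖ ^ m i := by
              rw [norm_prod]; simp [norm_pow]
          _ ≤ ∏ i, ‖z‖ ^ m i := by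
              refine Finset.prod_le_prod (fun i _ => by positivity) (fun i _ => ?_)
              exact pow_le_pow_left₀ (norm_nonneg _)
                (by simpa using norm_le_pi_norm z i) _
          _ = ‖z‖ ^ (∑ i, m i) := Finset.prod_pow_eq_pow_sum _ _ _
          _ ≤ ‖z‖ ^ k := by
              refine pow_le_pow_right₀ hz ?_
              rw [sum_univ_eq_degree]; exact hk m hm
    _ = _ := (Finset.sum_mul _ _ _).symm

lemma eval_smul_of_homogeneous {N : ℕ} (p : MvPolynomial (Fin N) ℂ) (n : ℕ)
    (hp : p.IsHomogeneous n) (c : ℂ) (z : Fin N → ℂ) :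
    MvPolynomial.eval (c • z) p = c ^ n * MvPolynomial.eval z p := by
  rw [eval_eq', eval_eq', Finset.mul_sum]
  refine Finset.sum_congr rfl fun m hm => ?_
  have hdeg : ∑ i, m i = n := by
    rw [sum_univ_eq_degree, Finsupp.degree_eq_weight_one]
    exact hp (mem_support_iff.mp hm)
  calc p.coeff m * ∏ i, (c • z) i ^ m i
      = p.coeff m * ((∏ i, c ^ m i) * ∏ i, z i ^ m i) := by
        simp [Pi.smul_apply, smul_eq_mul, mul_pow, Finset.prod_mul_distrib]
    _ = c ^ n * (p.coeff m * ∏ i, z i ^ m i) := by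
        rw [Finset.prod_pow_eq_pow_sum, hdeg]; ring


/-- The set of preperiodic points of a regular endomorphism of `ℂ^N` of algebraic degree
`d ≥ 2` is bounded. -/
theorem preperiodic_points_bounded
    (N : ℕ) (hN : 1 ≤ N)
    (f : Fin N → MvPolynomial (Fin N) ℂ)
    (d : ℕ) (hd : 2 ≤ d) (hreg : IsRegularEndo f d) :
    ∃ R : ℝ, 0 < R ∧ ∀ x : Fin N → ℂ, IsPreperiodicPt (evalMap f) x → ‖x‖ ≤ R := by
  haveI : Nonempty (Fin N) := Fin.pos_iff_nonempty.mp hN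
  set fh : (Fin N → ℂ) → (Fin N → ℂ) :=
    fun z j => MvPolynomial.eval z (MvPolynomial.homogeneousComponent d (f j)) with hfh
  -- continuity
  have hcont : Continuous fun z => ‖fh z‖ :=
    (continuous_pi fun j => MvPolynomial.continuous_eval (MvPolynomial.homogeneousComponent d (f j))).norm
  -- min on sphere
  have hsph : (Metric.sphere (0 : Fin N → ℂ) 1).Nonempty :=
    NormedSpace.sphere_nonempty.mpr zero_le_one
  obtain ⟨u0, hu0s, hmin⟩ := (isCompact_sphere (0 : Fin N → ℂ) 1).exists_isMinOn hsph
    hcont.continuousOn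
  set c : ℝ := ‖fh u0‖ with hc
  have hu0 : ‖u0‖ = 1 := mem_sphere_zero_iff_norm.mp hu0s
  have hcpos : 0 < c := by
    rw [hc, norm_pos_iff]
    intro h0
    have : u0 = 0 := hreg.2 u0 fun j => congrFun h0 j
    rw [this] at hu0; simp at hu0
  -- homogeneous lower bound
  have hlow : ∀ z : Fin N → ℂ, c * ‖z‖ ^ d ≤ ‖fh z‖ := by
    intro z
    rcases eq_or_ne z 0 with rfl | hz
    · simp [zero_pow (by omega : d ≠ 0)]
    · have hznorm : (0 : ℝ) < ‖z‖ := norm_pos_iff.mpr hz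
      set u : Fin N → ℂ := ((‖z‖ : ℂ))⁻¹ • z with hu
      have huz : ((‖z‖ : ℂ)) • u = z := by
        rw [hu, smul_smul, mul_inv_cancel₀ (by exact_mod_cast hznorm.ne'), one_smul]
      have hunorm : ‖u‖ = 1 := by
        rw [hu, norm_smul]
        simp [hznorm.ne']
      have hus : u ∈ Metric.sphere (0 : Fin N → ℂ) 1 := mem_sphere_zero_iff_norm.mpr hunorm
      have hfz : fh z = ((‖z‖ : ℂ) ^ d) • fh u := by
        funext j
        rw [hfh]
        simp only [Pi.smul_apply, smul_eq_mul]
        rw [← huz, eval_smul_of_homogeneous _ d (homogeneousComponent_isHomogeneous d (f j)),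
          huz]
      calc c * ‖z‖ ^ d ≤ ‖fh u‖ * ‖z‖ ^ d := by
            have : c ≤ ‖fh u‖ := hmin hus
            nlinarith [pow_pos hznorm d]
        _ = ‖fh z‖ := by
            rw [hfz, norm_smul, norm_pow, Complex.norm_real]
            rw [Real.norm_eq_abs, abs_norm]
            ring
  -- lower-order bound
  set C : ℝ := ∑ j : Fin N, ∑ m ∈ (f j - MvPolynomial.homogeneousComponent d (f j)).support,
      ‖(f j - MvPolynomial.homogeneousComponent d (f j)).coeff m‖ with hC
  have hCnn : 0 ≤ C := by
    apply Finset.sum_nonneg; intro j _; apply Finset.sum_nonneg; intro m _; positivity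
  have hlower : ∀ z : Fin N → ℂ, 1 ≤ ‖z‖ → ‖evalMap f z - fh z‖ ≤ C * ‖z‖ ^ (d - 1) := by
    intro z hz
    rw [pi_norm_le_iff_of_nonneg (by positivity)]
    intro j
    set g := f j - MvPolynomial.homogeneousComponent d (f j) with hg
    have hgev : (evalMap f z - fh z) j = MvPolynomial.eval z g := by
      simp [evalMap, hfh, hg, map_sub]
    rw [hgev]
    have hdegg : ∀ m ∈ g.support, Finsupp.degree m ≤ d - 1 := by
      intro m hm
      have hne : g.coeff m ≠ 0 := mem_support_iff.mp hm
      by_contra hgt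
      push_neg at hgt
      have hge : d ≤ Finsupp.degree m := by omega
      rcases eq_or_lt_of_le hge with heq | hlt
      · apply hne
        rw [hg, MvPolynomial.coeff_sub, coeff_homogeneousComponent, if_pos heq.symm, sub_self]
      · apply hne
        have h1 : (f j).coeff m = 0 := by
          apply MvPolynomial.coeff_eq_zero_of_totalDegree_lt
          rw [hreg.1 j]
          calc d < Finsupp.degree m := hlt
            _ = ∑ i ∈ m.support, m i := rfl
        rw [hg, MvPolynomial.coeff_sub, coeff_homogeneousComponent,
          if_neg (by omega : ¬ Finsupp.degree m = d), h1, sub_zero]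
    have := eval_abs_le g (d - 1) hdegg z hz
    refine le_trans (by simpa using this) ?_
    refine mul_le_mul_of_nonneg_right ?_ (by positivity)
    rw [hC]
    exact Finset.single_le_sum (f := fun j => ∑ m ∈ (f j -
      MvPolynomial.homogeneousComponent d (f j)).support,
      ‖(f j - MvPolynomial.homogeneousComponent d (f j)).coeff m‖)
      (fun i _ => Finset.sum_nonneg fun m _ => by positivity) (Finset.mem_univ j)
  -- choose R
  set R : ℝ := max 1 ((C + 2) / c) with hR
  have hR1 : (1 : ℝ) ≤ R := le_max_left _ _
  have hRpos : (0 : ℝ) < R := lt_of_lt_of_le one_pos hR1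
  -- growth
  have hgrow : ∀ z : Fin N → ℂ, R ≤ ‖z‖ → 2 * ‖z‖ ≤ ‖evalMap f z‖ := by
    intro z hzR
    have hz1 : 1 ≤ ‖z‖ := le_trans hR1 hzR
    have hzc : (C + 2) / c ≤ ‖z‖ := le_trans (le_max_right _ _) hzR
    have hcz : C + 2 ≤ c * ‖z‖ := by
      rw [div_le_iff₀ hcpos] at hzc; linarith
    have h1 : ‖fh z‖ - ‖evalMap f z - fh z‖ ≤ ‖evalMap f z‖ := by
      have ha := norm_sub_norm_le (fh z) (evalMap f z)
      have hb := norm_sub_rev (fh z) (evalMap f z)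
      rw [hb] at ha
      linarith
    have hdd : ‖z‖ ^ d = ‖z‖ ^ (d - 1) * ‖z‖ := by
      rw [← pow_succ]
      congr 1
      omega
    have hpow1 : ‖z‖ ≤ ‖z‖ ^ (d - 1) := by
      calc ‖z‖ = ‖z‖ ^ 1 := (pow_one _).symm
        _ ≤ ‖z‖ ^ (d - 1) := pow_le_pow_right₀ hz1 (by omega)
    have l1 := hlow z
    have l2 := hlower z hz1
    rw [hdd] at l1
    have hpownn : (0 : ℝ) < ‖z‖ ^ (d - 1) := by positivity
    nlinarith
  -- iterate growth
  have hiter : ∀ x : Fin N → ℂ, R ≤ ‖x‖ → ∀ k : ℕ,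
      2 ^ k * ‖x‖ ≤ ‖(evalMap f)^[k] x‖ := by
    intro x hx k
    induction k with
    | zero => simp
    | succ k ih =>
      have hk1 : (1 : ℝ) ≤ 2 ^ k := one_le_pow₀ one_le_two
      have hxk : R ≤ ‖(evalMap f)^[k] x‖ := by nlinarith [hRpos]
      have := hgrow _ hxk
      rw [Function.iterate_succ_apply']
      calc 2 ^ (k + 1) * ‖x‖ = 2 * (2 ^ k * ‖x‖) := by ring
        _ ≤ 2 * ‖(evalMap f)^[k] x‖ := by linarith
        _ ≤ ‖evalMap f ((evalMap f)^[k] x)‖ := this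
  refine ⟨R, hRpos, fun x hpre => ?_⟩
  by_contra hxR
  push_neg at hxR
  obtain ⟨n, m, hm, heq⟩ := hpre
  set y := (evalMap f)^[n] x with hy
  have hyR : R ≤ ‖y‖ := by
    have := hiter x hxR.le n
    have h1 : (1 : ℝ) ≤ 2 ^ n := one_le_pow₀ one_le_two
    nlinarith
  have hmy : (evalMap f)^[m] y = y := by
    rw [hy, ← Function.iterate_add_apply, add_comm m n, heq]
  have := hiter y hyR m
  rw [hmy] at this
  have h2m : (2 : ℝ) ≤ 2 ^ m := by
    calc (2 : ℝ) = 2 ^ 1 := (pow_one _).symm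
      _ ≤ 2 ^ m := pow_le_pow_right₀ one_le_two hm
  have hypos : 0 < ‖y‖ := lt_of_lt_of_le hRpos hyR
  nlinarith
end
end
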